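/- There exists a thick subset A of ℕ such that there do not exist a ∈ A and a rational number r ≠ 1 with a·r ∈ A and a·r² ∈ A (where a·r and a·r² are required to be natural numbers lying in A). -/

import Mathlib

/-- `A ⊆ ℕ` is thick: it contains arbitrarily long intervals. -/
def Thick (A : Set ℕ) : Prop := ∀ n : ℕ, ∃ m : ℕ, Set.Icc m (m + n) ⊆ A

namespace GPThickAux

def M (k : ℕ) : ℕ := 2 ^ (4 ^ (k + 2))

lemma M_ge (k : ℕ) : 256 ≤ M k := by
  have h : 8 ≤ 4 ^ (k + 2) := by
    calc 8 ≤ 4 ^ 2 := by norm_num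
    _ ≤ 4 ^ (k + 2) := Nat.pow_le_pow_right (by norm_num) (by omega)
  calc (256 : ℕ) = 2 ^ 8 := by norm_num
  _ ≤ 2 ^ (4 ^ (k + 2)) := Nat.pow_le_pow_right (by norm_num) h

lemma k_le_M (k : ℕ) : k ≤ M k := by
  have h1 : k < 2 ^ k := Nat.lt_two_pow_self (n := k)
  have h2 : k ≤ 4 ^ (k + 2) := by
    calc k ≤ 2 ^ k := h1.le
    _ ≤ 2 ^ (2 * (k + 2)) := Nat.pow_le_pow_right (by norm_num) (by omega)
    _ = 4 ^ (k + 2) := by rw [pow_mul]; norm_num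
  calc k ≤ 4 ^ (k + 2) := h2
  _ ≤ 2 ^ (4 ^ (k + 2)) := (Nat.lt_two_pow_self (n := _)).le

lemma sq_lt_M (k : ℕ) : k * k < M k := by
  have h1 : k < 2 ^ k := Nat.lt_two_pow_self (n := k)
  have h2 : 2 * k < 4 ^ (k + 2) := by
    calc 2 * k < 2 * 2 ^ k := by omega
    _ = 2 ^ (k + 1) := by ring
    _ ≤ 2 ^ (2 * (k + 2)) := Nat.pow_le_pow_right (by norm_num) (by omega)
    _ = 4 ^ (k + 2) := by rw [pow_mul]; norm_num
  calc k * k < 2 ^ k * 2 ^ k := Nat.mul_lt_mul'' h1 h1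
  _ = 2 ^ (2 * k) := by rw [two_mul, pow_add]
  _ < 2 ^ (4 ^ (k + 2)) := Nat.pow_lt_pow_right (by norm_num) h2

lemma M_mono : Monotone M := by
  intro a b hab
  exact Nat.pow_le_pow_right (by norm_num) (Nat.pow_le_pow_right (by norm_num) (by omega))

/-- gap: end of one interval squared is at most the start of the next -/
lemma gap {i j : ℕ} (h : i < j) : (M i + i) ^ 2 ≤ M j := by
  have h1 : (M i + i) ^ 2 ≤ (2 * M i) ^ 2 := by
    have := k_le_M i; exact Nat.pow_le_pow_left (by omega) 2
  have h2 : (2 * M i) ^ 2 = 2 ^ (2 * 4 ^ (i + 2) + 2) := by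
    unfold M; rw [mul_pow, ← pow_mul]; ring_nf
  have h3 : 2 * 4 ^ (i + 2) + 2 ≤ 4 ^ (i + 3) := by
    have : 1 ≤ 4 ^ (i + 2) := Nat.one_le_pow _ _ (by norm_num)
    calc 2 * 4 ^ (i + 2) + 2 ≤ 4 * 4 ^ (i + 2) := by omega
    _ = 4 ^ (i + 3) := by rw [pow_succ]; ring
  calc (M i + i) ^ 2 ≤ 2 ^ (2 * 4 ^ (i + 2) + 2) := h2 ▸ h1
  _ ≤ 2 ^ (4 ^ (i + 3)) := Nat.pow_le_pow_right (by norm_num) h3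
  _ = M (i + 1) := rfl
  _ ≤ M j := M_mono h

/-- interval indices respect order of elements -/
lemma idx_mono {p q x y : ℕ} (hx : x ∈ Set.Icc (M p) (M p + p))
    (hy : y ∈ Set.Icc (M q) (M q + q)) (hxy : x ≤ y) : p ≤ q := by
  by_contra h
  push_neg at h
  have hg := gap h
  have h1 : M q + q < (M q + q) ^ 2 := by
    have := M_ge q
    nlinarith [sq_nonneg (M q + q)]
  have : y < x := by
    calc y ≤ M q + q := hy.2
    _ < (M q + q) ^ 2 := h1
    _ ≤ M p := hg
    _ ≤ x := hx.1
  omega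

/-- Core contradiction lemma. -/
lemma core {i l j a b c : ℕ}
    (ha : a ∈ Set.Icc (M i) (M i + i)) (hb : b ∈ Set.Icc (M l) (M l + l))
    (hc : c ∈ Set.Icc (M j) (M j + j)) (heq : b * b = a * c)
    (hac : a ≤ c) (hba : b ≠ a) : False := by
  obtain ⟨ha1, ha2⟩ := ha
  obtain ⟨hb1, hb2⟩ := hb
  obtain ⟨hc1, hc2⟩ := hc
  have hMi := M_ge i
  have hMj := M_ge j
  have hMl := M_ge l
  have ha0 : 2 ≤ a := by omega
  have hc0 : 0 < c := by omega
  -- a ≤ b ≤ c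
  have hab : a ≤ b := by
    by_contra h
    push_neg at h
    have : b * b < a * a := Nat.mul_lt_mul'' h h
    nlinarith
  have hbc : b ≤ c := by
    by_contra h
    push_neg at h
    have : c * c < b * b := Nat.mul_lt_mul'' h h
    nlinarith
  have hil : i ≤ l := idx_mono ⟨ha1, ha2⟩ ⟨hb1, hb2⟩ hab
  have hlj : l ≤ j := idx_mono ⟨hb1, hb2⟩ ⟨hc1, hc2⟩ hbc
  rcases eq_or_lt_of_le (le_trans hil hlj) with hij | hij
  · -- same interval: i = l = j
    subst hij
    have hli : l = i := le_antisymm hlj hil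
    subst hli
    -- work in ℤ
    set m : ℤ := (M l : ℤ) with hm
    have hm0 : (0:ℤ) ≤ m := by positivity
    set α : ℤ := (a:ℤ) - m with hαd
    set β : ℤ := (b:ℤ) - m with hβd
    set γ : ℤ := (c:ℤ) - m with hγd
    have hα : (0:ℤ) ≤ α ∧ α ≤ l := by constructor <;> (simp only [hαd, hm]; push_cast; omega)
    have hβ : (0:ℤ) ≤ β ∧ β ≤ l := by constructor <;> (simp only [hβd, hm]; push_cast; omega)
    have hγ : (0:ℤ) ≤ γ ∧ γ ≤ l := by constructor <;> (simp only [hγd, hm]; push_cast; omega)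
    have heqZ : (m + β) * (m + β) = (m + α) * (m + γ) := by
      have : ((b:ℤ)) * b = a * c := by exact_mod_cast heq
      simp only [hαd, hβd, hγd]
      linarith [this]
    have key : m * (2 * β - α - γ) = α * γ - β * β := by linear_combination heqZ
    rcases eq_or_ne (2 * β) (α + γ) with h2 | h2
    · -- equality case: α = β = γ, so b = a
      have hβ2 : β * β = α * γ := by
        have h0 : 2 * β - α - γ = 0 := by omega
        rw [h0, mul_zero] at key
        linarith
      have hE1 : 2 * β - α - γ = 0 := by linarith
      have h4 : (α - γ) * (α - γ) = 0 := by
        linear_combination (-(2 * β + α + γ)) * hE1 + 4 * hβ2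
      have hαγ : α = γ := sub_eq_zero.mp (mul_self_eq_zero.mp h4)
      have hβα : β = α := by omega
      apply hba
      have : (b:ℤ) = (a:ℤ) := by
        have := hβα
        simp only [hβd, hαd] at this
        linarith
      exact_mod_cast this
    · have h1 : (1:ℤ) ≤ |2 * β - α - γ| := by
        rcases lt_or_gt_of_ne h2 with h | h <;> rcases abs_cases (2 * β - α - γ) with ⟨he, _⟩ | ⟨he, _⟩ <;> omega
      have hm1 : m ≤ m * |2 * β - α - γ| := le_mul_of_one_le_right hm0 h1
      have hm2 : m * |2 * β - α - γ| = |α * γ - β * β| := by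
        rw [← key, abs_mul, abs_of_nonneg hm0]
      have hαγl : α * γ ≤ (l : ℤ) * l := mul_le_mul hα.2 hγ.2 hγ.1 (by positivity)
      have hββl : β * β ≤ (l : ℤ) * l := mul_le_mul hβ.2 hβ.2 hβ.1 (by positivity)
      have hαγ0 : (0:ℤ) ≤ α * γ := mul_nonneg hα.1 hγ.1
      have hββ0 : (0:ℤ) ≤ β * β := mul_nonneg hβ.1 hβ.1
      have hbound : |α * γ - β * β| ≤ (l : ℤ) * l :=
        abs_sub_le_iff.mpr ⟨by linarith, by linarith⟩
      have hlt : (l : ℤ) * l < m := by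
        have := sq_lt_M l
        simp only [hm]
        exact_mod_cast this
      linarith
  · -- i < j
    rcases eq_or_lt_of_le hlj with hlj' | hlj'
    · -- l = j : b too large
      subst hlj'
      have hg : (M i + i) ^ 2 ≤ M l := gap hij
      have hg' : (M i + i) * (M i + i) ≤ M l := by rw [← sq]; exact hg
      have h256 : 256 ≤ M i + i := by omega
      have hlarge : 2 * (M i + i) < M l := by
        have hs : 2 * (M i + i) < 256 * (M i + i) := by omega
        have hs2 : 256 * (M i + i) ≤ (M i + i) * (M i + i) := Nat.mul_le_mul h256 (le_refl _)
        omega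
      have h2m : c ≤ 2 * M l := by have := k_le_M l; omega
      have hstep : a * c ≤ (M i + i) * (2 * M l) := Nat.mul_le_mul ha2 h2m
      have hMl0 : 0 < M l := by omega
      have hstep2 : (M i + i) * (2 * M l) < M l * M l := by
        calc (M i + i) * (2 * M l) = (2 * (M i + i)) * M l := by ring
        _ < M l * M l := Nat.mul_lt_mul_of_lt_of_le hlarge (le_refl _) hMl0
      have hbb : M l * M l ≤ b * b := Nat.mul_le_mul hb1 hb1
      omega
    · -- l < j : b too small
      have hg : (M l + l) ^ 2 ≤ M j := gap hlj'
      have h1 : b * b ≤ M j := by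
        calc b * b ≤ (M l + l) * (M l + l) := Nat.mul_le_mul hb2 hb2
        _ = (M l + l) ^ 2 := (sq _).symm
        _ ≤ M j := hg
      have h2 : 2 * c ≤ a * c := Nat.mul_le_mul_right c ha0
      omega

end GPThickAux

open GPThickAux in
/-- there is a thick set `A ⊆ ℕ` containing no configuration
`{a, a·r, a·r²}` with `a ∈ A` and `r ∈ ℚ`, `r ≠ 1`. -/
theorem exists_thick_no_three_term_gp :
    ∃ A : Set ℕ, Thick A ∧
      ¬∃ a ∈ A, ∃ r : ℚ, r ≠ 1 ∧ ∃ b ∈ A, ∃ c ∈ A,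
        (b : ℚ) = (a : ℚ) * r ∧ (c : ℚ) = (a : ℚ) * r ^ 2 := by
  refine ⟨⋃ k, Set.Icc (M k) (M k + k), ?_, ?_⟩
  · intro n
    exact ⟨M n, Set.subset_iUnion (fun k => Set.Icc (M k) (M k + k)) n⟩
  · rintro ⟨a, ha, r, hr1, b, hb, c, hc, hbr, hcr⟩
    obtain ⟨i, hi⟩ := Set.mem_iUnion.mp ha
    obtain ⟨l, hl⟩ := Set.mem_iUnion.mp hb
    obtain ⟨j, hj⟩ := Set.mem_iUnion.mp hc
    have hMi := M_ge i
    have ha0 : (a : ℚ) ≠ 0 := by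
      have h : 0 < a := by have := hi.1; omega
      exact_mod_cast h.ne'
    have heqQ : (b : ℚ) * b = a * c := by
      rw [hbr, hcr]; ring
    have heq : b * b = a * c := by exact_mod_cast heqQ
    have hba : b ≠ a := by
      intro h
      apply hr1
      rw [h] at hbr
      have h1 : (a:ℚ) * 1 = a * r := by rw [mul_one]; exact hbr
      exact (mul_left_cancel₀ ha0 h1).symm
    rcases le_or_gt a c with hac | hca
    · exact core hi hl hj heq hac hba
    · have hbc : b ≠ c := by
        intro h
        rw [h] at heq
        have hc0 : 0 < c := by have := hj.1; have := M_ge j; omega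
        have : c = a := Nat.eq_of_mul_eq_mul_right hc0 heq
        omega
      have heq' : b * b = c * a := by rw [heq, Nat.mul_comm]
      exact core hj hl hi heq' hca.le hbc
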